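/- For every path connected subset A of the Manhattan plane ℝ₁², the horizontal and vertical hatching operators commute on A, i.e. L_x(L_y(A)) = L_y(L_x(A)). -/

import Mathlib

open Set

/-- The taxicab (ℓ¹) distance on the plane, making `ℝ × ℝ` the Manhattan plane ℝ₁². -/
def taxiDist (p q : ℝ × ℝ) : ℝ := |p.1 - q.1| + |p.2 - q.2|

/-- Horizontal hatching `L_x(A)`. -/
def hatchX (A : Set (ℝ × ℝ)) : Set (ℝ × ℝ) :=
  {p | ∃ a ∈ A, ∃ b ∈ A, a.2 = p.2 ∧ b.2 = p.2 ∧ a.1 ≤ p.1 ∧ p.1 ≤ b.1}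

/-- Vertical hatching `L_y(A)`. -/
def hatchY (A : Set (ℝ × ℝ)) : Set (ℝ × ℝ) :=
  {p | ∃ a ∈ A, ∃ b ∈ A, a.1 = p.1 ∧ b.1 = p.1 ∧ a.2 ≤ p.2 ∧ p.2 ≤ b.2}

/-- Double hatching `L(A) = L_x(L_y(A))`. -/
def doubleHatch (A : Set (ℝ × ℝ)) : Set (ℝ × ℝ) := hatchX (hatchY A)

lemma mem_hatchX_self {A : Set (ℝ × ℝ)} {p : ℝ × ℝ} (h : p ∈ A) : p ∈ hatchX A :=
  ⟨p, h, p, h, rfl, rfl, le_refl _, le_refl _⟩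

/-- If a continuous curve inside `A` starts left of the vertical line `x = p₁` at height `≥ y`
and ends right of it at height `≥ y`, then `hatchX A` meets the line at height `≥ y`. -/
lemma upper_aux (A : Set (ℝ × ℝ)) (φ : ℝ → ℝ × ℝ) (hφ : Continuous φ)
    (hmem : ∀ t, φ t ∈ A) (p₁ y : ℝ)
    (h0x : (φ 0).1 ≤ p₁) (h1x : p₁ ≤ (φ 1).1)
    (h0y : y ≤ (φ 0).2) (h1y : y ≤ (φ 1).2) :
    ∃ q ∈ hatchX A, q.1 = p₁ ∧ y ≤ q.2 := by
  by_cases h : ∃ t, (φ t).1 = p₁ ∧ y ≤ (φ t).2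
  · obtain ⟨t, ht1, ht2⟩ := h
    exact ⟨φ t, mem_hatchX_self (hmem t), ht1, ht2⟩
  push_neg at h
  have contx : Continuous fun t => (φ t).1 := continuous_fst.comp hφ
  have conty : Continuous fun t => (φ t).2 := continuous_snd.comp hφ
  -- a point of A at height exactly `y`, on the left of the line
  have hu : ∃ u ∈ A, u.1 ≤ p₁ ∧ u.2 = y := by
    set S : Set ℝ := {t | t ∈ Icc (0:ℝ) 1 ∧ p₁ ≤ (φ t).1} with hS
    have hne : (1:ℝ) ∈ S := ⟨⟨zero_le_one, le_refl 1⟩, h1x⟩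
    have hScl : IsClosed S := isClosed_Icc.inter (isClosed_le continuous_const contx)
    have hbdd : BddBelow S := ⟨0, fun t ht => ht.1.1⟩
    set t₀ := sInf S with ht₀
    have ht₀S : t₀ ∈ S := hScl.csInf_mem ⟨1, hne⟩ hbdd
    have h01 : (0:ℝ) ≤ t₀ := ht₀S.1.1
    have ht₀x : (φ t₀).1 = p₁ := by
      have hiv := intermediate_value_Icc h01 (contx.continuousOn)
      have : p₁ ∈ Icc (φ 0).1 (φ t₀).1 := ⟨h0x, ht₀S.2⟩
      obtain ⟨s, hs, hsx⟩ := hiv this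
      have hsS : s ∈ S := ⟨⟨hs.1, le_trans hs.2 ht₀S.1.2⟩, le_of_eq hsx.symm⟩
      have : t₀ ≤ s := csInf_le hbdd hsS
      have hst : s = t₀ := le_antisymm hs.2 this
      rw [← hst]; exact hsx
    have hlt : (φ t₀).2 < y := h t₀ ht₀x
    have hiv := intermediate_value_Icc' h01 (conty.continuousOn)
    have hy : y ∈ Icc (φ t₀).2 (φ 0).2 := ⟨le_of_lt hlt, h0y⟩
    obtain ⟨s, hs, hsy⟩ := hiv hy
    refine ⟨φ s, hmem s, ?_, hsy⟩
    have hst : s < t₀ := lt_of_le_of_ne hs.2 (by rintro rfl; exact absurd hsy (ne_of_lt hlt))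
    by_contra hcon
    push_neg at hcon
    have hsS : s ∈ S := ⟨⟨hs.1, le_trans hs.2 ht₀S.1.2⟩, le_of_lt hcon⟩
    exact absurd (csInf_le hbdd hsS) (not_le.mpr hst)
  -- a point of A at height exactly `y`, on the right of the line
  have hv : ∃ v ∈ A, p₁ ≤ v.1 ∧ v.2 = y := by
    set S : Set ℝ := {t | t ∈ Icc (0:ℝ) 1 ∧ (φ t).1 ≤ p₁} with hS
    have hne : (0:ℝ) ∈ S := ⟨⟨le_refl 0, zero_le_one⟩, h0x⟩
    have hScl : IsClosed S := isClosed_Icc.inter (isClosed_le contx continuous_const)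
    have hbdd : BddAbove S := ⟨1, fun t ht => ht.1.2⟩
    set t₀ := sSup S with ht₀
    have ht₀S : t₀ ∈ S := hScl.csSup_mem ⟨0, hne⟩ hbdd
    have h01 : t₀ ≤ (1:ℝ) := ht₀S.1.2
    have ht₀x : (φ t₀).1 = p₁ := by
      have hiv := intermediate_value_Icc h01 (contx.continuousOn)
      have : p₁ ∈ Icc (φ t₀).1 (φ 1).1 := ⟨ht₀S.2, h1x⟩
      obtain ⟨s, hs, hsx⟩ := hiv this
      have hsS : s ∈ S := ⟨⟨le_trans ht₀S.1.1 hs.1, hs.2⟩, le_of_eq hsx⟩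
      have : s ≤ t₀ := le_csSup hbdd hsS
      have hst : s = t₀ := le_antisymm this hs.1
      rw [← hst]; exact hsx
    have hlt : (φ t₀).2 < y := h t₀ ht₀x
    have hiv := intermediate_value_Icc h01 (conty.continuousOn)
    have hy : y ∈ Icc (φ t₀).2 (φ 1).2 := ⟨le_of_lt hlt, h1y⟩
    obtain ⟨s, hs, hsy⟩ := hiv hy
    refine ⟨φ s, hmem s, ?_, hsy⟩
    have hst : t₀ < s := lt_of_le_of_ne hs.1 (by rintro rfl; exact absurd hsy (ne_of_lt hlt))
    by_contra hcon
    push_neg at hcon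
    have hsS : s ∈ S := ⟨⟨le_trans ht₀S.1.1 hs.1, hs.2⟩, le_of_lt hcon⟩
    exact absurd (le_csSup hbdd hsS) (not_le.mpr hst)
  obtain ⟨u, huA, hux, huy⟩ := hu
  obtain ⟨v, hvA, hvx, hvy⟩ := hv
  exact ⟨(p₁, y), ⟨u, huA, v, hvA, huy, hvy, hux, hvx⟩, rfl, le_refl y⟩

/-- Membership in `hatchX` of the vertical-flip image of a set. -/
lemma flipY_mem_hatchX {A : Set (ℝ × ℝ)} {p : ℝ × ℝ} :
    p ∈ hatchX ((fun q : ℝ × ℝ => (q.1, -q.2)) '' A) ↔ ((p.1, -p.2) : ℝ × ℝ) ∈ hatchX A := by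
  constructor
  · rintro ⟨a, ⟨a', ha', rfl⟩, b, ⟨b', hb', rfl⟩, h1, h2, h3, h4⟩
    exact ⟨a', ha', b', hb', by simpa using congrArg Neg.neg h1,
      by simpa using congrArg Neg.neg h2, h3, h4⟩
  · rintro ⟨a, ha, b, hb, h1, h2, h3, h4⟩
    exact ⟨(a.1, -a.2), ⟨a, ha, rfl⟩, (b.1, -b.2), ⟨b, hb, rfl⟩,
      by simp [h1], by simp [h2], h3, h4⟩

/-- Lower counterpart of `upper_aux`. -/
lemma lower_aux (A : Set (ℝ × ℝ)) (φ : ℝ → ℝ × ℝ) (hφ : Continuous φ)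
    (hmem : ∀ t, φ t ∈ A) (p₁ y : ℝ)
    (h0x : (φ 0).1 ≤ p₁) (h1x : p₁ ≤ (φ 1).1)
    (h0y : (φ 0).2 ≤ y) (h1y : (φ 1).2 ≤ y) :
    ∃ q ∈ hatchX A, q.1 = p₁ ∧ q.2 ≤ y := by
  set A' : Set (ℝ × ℝ) := (fun q : ℝ × ℝ => (q.1, -q.2)) '' A with hA'
  set φ' : ℝ → ℝ × ℝ := fun t => ((φ t).1, -(φ t).2) with hφ'
  have hcont : Continuous φ' := ((continuous_fst.comp hφ).prodMk (continuous_snd.comp hφ).neg)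
  have hmem' : ∀ t, φ' t ∈ A' := fun t => ⟨φ t, hmem t, rfl⟩
  obtain ⟨q, hq, hq1, hq2⟩ := upper_aux A' φ' hcont hmem' p₁ (-y)
    h0x h1x (by simpa [hφ'] using h0y) (by simpa [hφ'] using h1y)
  refine ⟨(q.1, -q.2), ?_, hq1, show -q.2 ≤ y by linarith⟩
  exact flipY_mem_hatchX.mp hq

/-- The key inclusion, for path connected sets. -/
lemma key_incl (A : Set (ℝ × ℝ)) (hA : IsPathConnected A) :
    hatchX (hatchY A) ⊆ hatchY (hatchX A) := by
  rintro p ⟨a, ⟨am, hamA, ap, hapA, ham1, hap1, ham2, hap2⟩,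
            b, ⟨bm, hbmA, bp, hbpA, hbm1, hbp1, hbm2, hbp2⟩, ha2, hb2, ha1, hb1⟩
  -- upper point: path from ap to bp in A
  have hJp : JoinedIn A ap bp := hA.joinedIn ap hapA bp hbpA
  have hJm : JoinedIn A am bm := hA.joinedIn am hamA bm hbmA
  obtain ⟨d, hd, hd1, hd2⟩ := upper_aux A hJp.somePath.extend hJp.somePath.continuous_extend
    (fun t => by rw [Path.extend]; exact hJp.somePath_mem _) p.1 p.2
    (by rw [Path.extend_zero]; rw [hap1]; exact ha1)
    (by rw [Path.extend_one]; rw [hbp1]; exact hb1)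
    (by rw [Path.extend_zero]; rw [← ha2]; exact hap2)
    (by rw [Path.extend_one]; rw [← hb2]; exact hbp2)
  obtain ⟨c, hc, hc1, hc2⟩ := lower_aux A hJm.somePath.extend hJm.somePath.continuous_extend
    (fun t => by rw [Path.extend]; exact hJm.somePath_mem _) p.1 p.2
    (by rw [Path.extend_zero]; rw [ham1]; exact ha1)
    (by rw [Path.extend_one]; rw [hbm1]; exact hb1)
    (by rw [Path.extend_zero]; rw [← ha2]; exact ham2)
    (by rw [Path.extend_one]; rw [← hb2]; exact hbm2)
  exact ⟨c, hc, d, hd, hc1, hd1, hc2, hd2⟩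

lemma swap_mem_hatchX {A : Set (ℝ × ℝ)} {p : ℝ × ℝ} :
    p ∈ hatchX (Prod.swap '' A) ↔ p.swap ∈ hatchY A := by
  constructor
  · rintro ⟨a, ⟨a', ha', rfl⟩, b, ⟨b', hb', rfl⟩, h1, h2, h3, h4⟩
    exact ⟨a', ha', b', hb', h1, h2, h3, h4⟩
  · rintro ⟨a, ha, b, hb, h1, h2, h3, h4⟩
    exact ⟨a.swap, ⟨a, ha, rfl⟩, b.swap, ⟨b, hb, rfl⟩, h1, h2, h3, h4⟩

lemma swap_mem_hatchY {A : Set (ℝ × ℝ)} {p : ℝ × ℝ} :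
    p ∈ hatchY (Prod.swap '' A) ↔ p.swap ∈ hatchX A := by
  constructor
  · rintro ⟨a, ⟨a', ha', rfl⟩, b, ⟨b', hb', rfl⟩, h1, h2, h3, h4⟩
    exact ⟨a', ha', b', hb', h1, h2, h3, h4⟩
  · rintro ⟨a, ha, b, hb, h1, h2, h3, h4⟩
    exact ⟨a.swap, ⟨a, ha, rfl⟩, b.swap, ⟨b, hb, rfl⟩, h1, h2, h3, h4⟩

lemma hatchX_swap (A : Set (ℝ × ℝ)) : hatchX (Prod.swap '' A) = Prod.swap '' hatchY A := by
  ext p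
  rw [swap_mem_hatchX]
  constructor
  · intro h; exact ⟨p.swap, h, Prod.swap_swap p⟩
  · rintro ⟨q, hq, rfl⟩; simpa using hq

lemma hatchY_swap (A : Set (ℝ × ℝ)) : hatchY (Prod.swap '' A) = Prod.swap '' hatchX A := by
  ext p
  rw [swap_mem_hatchY]
  constructor
  · intro h; exact ⟨p.swap, h, Prod.swap_swap p⟩
  · rintro ⟨q, hq, rfl⟩; simpa using hq

/-- For every path connected subset `A` of the Manhattan plane, the horizontal and
vertical hatching operators commute on `A`: `L_x(L_y(A)) = L_y(L_x(A))`. -/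
theorem hatch_comm_of_pathConnected (A : Set (ℝ × ℝ)) (hA : IsPathConnected A) :
    hatchX (hatchY A) = hatchY (hatchX A) := by
  apply le_antisymm (key_incl A hA)
  have hA' : IsPathConnected (Prod.swap '' A) := hA.image continuous_swap
  have h := key_incl (Prod.swap '' A) hA'
  rw [hatchX_swap, hatchY_swap, hatchY_swap, hatchX_swap] at h
  intro p hp
  have : p.swap ∈ Prod.swap '' hatchY (hatchX A) := ⟨p, hp, rfl⟩
  obtain ⟨q, hq, hqe⟩ := h this
  have : q = p := by
    have := congrArg Prod.swap hqe
    simpa using this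
  rwa [← this]
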